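/- Let n ≥ 2, let ζ = Σ_{j=1}^n ζ_j dx^j be a constant complex-valued 1-form on ℝⁿ, let l ∈ {0,…,n}, and let u be a C² l-form on an open subset of ℝⁿ. Writing e_ζ(x) = e^{ζ·x} with ζ·x = Σ_j ζ_j x^j, the following identity holds pointwise: e_{−ζ}(dδ+δd)(e_ζ u) = (dδ+δd)u + (−1)^l d(ζ∨u) + ζ∧δu + δ(ζ∧u) + (−1)^{l+1} ζ∨du − ⟨ζ,ζ⟩u. -/

import Mathlib

noncomputable section

open MeasureTheory Finset

namespace EMPaper

/-- Points of `ℝⁿ`. -/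
abbrev Pt (n : ℕ) := Fin n → ℝ

/-- A graded element of the complexified exterior algebra `Λ ℝⁿ ⊗ ℂ`, encoded by its
coefficients on the basis monomials `dx^{α₁} ∧ ⋯ ∧ dx^{α_l}`, indexed by the set
`{α₁ < ⋯ < α_l} ⊆ Fin n`. -/
abbrev GF (n : ℕ) := Finset (Fin n) → ℂ

/-- A graded differential form on `ℝⁿ`. -/
abbrev Form (n : ℕ) := Pt n → GF n

variable {n : ℕ}

/-- The sign `(-1)^{#{(i,j) ∈ I × J : j < i}}` obtained when merging the increasing
enumerations of the disjoint sets `I` and `J`. -/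
def msgn (I J : Finset (Fin n)) : ℂ :=
  (-1 : ℂ) ^ (((I ×ˢ J).filter fun p => p.2 < p.1).card)

/-- The wedge (exterior) product. -/
def wedge (u v : GF n) : GF n := fun S =>
  ∑ I ∈ S.powerset, msgn I (S \ I) * u I * v (S \ I)

/-- The vee product, determined by `⟨w, v ∨ u⟩ = ⟨w ∧ v, u⟩`. -/
def vee (v u : GF n) : GF n := fun I =>
  ∑ J ∈ (univ \ I).powerset, msgn I J * v J * u (I ∪ J)

/-- The ℂ-bilinear (non-Hermitian) inner product for which the basis monomials are
orthonormal. -/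
def ginner (u v : GF n) : ℂ := ∑ S : Finset (Fin n), u S * v S

/-- Componentwise complex conjugation. -/
def gconj (u : GF n) : GF n := fun S => (starRingEnd ℂ) (u S)

/-- Projection onto the degree-`l` part. -/
def proj (l : ℕ) (u : GF n) : GF n := fun S => if S.card = l then u S else 0

/-- `u` is homogeneous of degree `l` (an element of `Λ^l`). -/
def IsGrade (l : ℕ) (u : GF n) : Prop := ∀ S : Finset (Fin n), S.card ≠ l → u S = 0

/-- The basis one-form `dx^j`. -/
def dxe (j : Fin n) : GF n := fun S => if S = {j} then 1 else 0

/-- The one-form with components `c j`. -/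
def oneG (c : Fin n → ℂ) : GF n := fun S => ∑ j, if S = {j} then c j else 0

/-- `Σ_l (-1)^l u^l`. -/
def altSign (u : GF n) : GF n := fun S => (-1 : ℂ) ^ S.card * u S

/-- Exterior derivative `du = Σ_j dx^j ∧ ∂_j u`, expressed in terms of the family of
partial derivatives `D j = ∂_j u` at a point. -/
def gd (D : Fin n → GF n) : GF n := fun S => ∑ j, wedge (dxe j) (D j) S

/-- Coderivative `δu = (-1)^l Σ_j dx^j ∨ ∂_j u` (degreewise on graded forms), expressed
in terms of the family of partial derivatives `D j = ∂_j u` at a point. -/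
def gdel (D : Fin n → GF n) : GF n := fun S =>
  (-1 : ℂ) ^ (S.card + 1) * ∑ j, vee (dxe j) (D j) S

/-- Classical partial derivative `∂_{x^j}` of a complex-valued function. -/
def pd (j : Fin n) (f : Pt n → ℂ) : Pt n → ℂ := fun x => fderiv ℝ f x (Pi.single j 1)

/-- Componentwise classical partial derivatives of a graded form. -/
def Dcl (φ : Form n) : Fin n → Form n := fun j x S => pd j (fun y => φ y S) x

/-- A test function: smooth and compactly supported. -/
def IsTest (φ : Pt n → ℂ) : Prop := ContDiff ℝ (⊤ : ℕ∞) φ ∧ HasCompactSupport φ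

/-- A graded form all of whose components are test functions. -/
def TestForm (φ : Form n) : Prop := ∀ S : Finset (Fin n), IsTest fun x => φ x S

/-- `f ∈ L²_loc(ℝⁿ)`. -/
def L2loc (f : Pt n → ℂ) : Prop :=
  AEStronglyMeasurable f (volume : Measure (Pt n)) ∧
    ∀ K : Set (Pt n), IsCompact K → IntegrableOn (fun x => ‖f x‖ ^ 2) K volume

/-- `g` is the weak `j`-th partial derivative of `f` on `ℝⁿ`. -/
def HasWeakPD (j : Fin n) (f g : Pt n → ℂ) : Prop :=
  ∀ φ : Pt n → ℂ, IsTest φ → ∫ x, g x * φ x = -∫ x, f x * pd j φ x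

/-- All components of the graded form `w` belong to `H¹_loc(ℝⁿ)`, with weak partial
derivatives given componentwise by the family `Dw`. -/
def H1locWith (w : Form n) (Dw : Fin n → Form n) : Prop :=
  (∀ S : Finset (Fin n), L2loc fun x => w x S) ∧
    (∀ (j : Fin n) (S : Finset (Fin n)),
      HasWeakPD j (fun x => w x S) fun x => Dw j x S) ∧
    ∀ (j : Fin n) (S : Finset (Fin n)), L2loc fun x => Dw j x S

/-- The classical exterior derivative of a form, computed componentwise. -/
def dCl (F : Form n) : Form n := fun x => gd fun j => Dcl F j x

/-- The classical coderivative of a form, computed componentwise. -/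
def delCl (F : Form n) : Form n := fun x => gdel fun j => Dcl F j x

/-- The Hodge Laplacian `(dδ + δd)F`. -/
def hodgeLap (F : Form n) : Form n := fun x => dCl (delCl F) x + delCl (dCl F) x

lemma msgn_singleton_left (k : Fin n) (T : Finset (Fin n)) :
    msgn {k} T = (-1 : ℂ) ^ (T.filter (· < k)).card := by
  unfold msgn
  rw [singleton_product, filter_map, card_map]
  rfl

lemma msgn_singleton_right (I : Finset (Fin n)) (k : Fin n) :
    msgn I {k} = (-1 : ℂ) ^ (I.filter (k < ·)).card := by
  unfold msgn
  rw [product_singleton, filter_map, card_map]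
  rfl

lemma wedge_dxe (k : Fin n) (v : GF n) (S : Finset (Fin n)) :
    wedge (dxe k) v S = if k ∈ S then msgn {k} (S.erase k) * v (S.erase k) else 0 := by
  unfold wedge dxe
  rw [Finset.sum_congr rfl (fun I _ => show (msgn I (S \ I) * if I = {k} then (1:ℂ) else 0) * v (S \ I)
      = if I = {k} then msgn {k} (S \ {k}) * v (S \ {k}) else 0 by
    split_ifs with h
    · subst h; ring
    · ring), Finset.sum_ite_eq' S.powerset ({k}) (fun I => msgn {k} (S \ {k}) * v (S \ {k}))]
  rw [sdiff_singleton_eq_erase]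
  congr 1
  simp [mem_powerset, singleton_subset_iff]

lemma vee_dxe (k : Fin n) (v : GF n) (I : Finset (Fin n)) :
    vee (dxe k) v I = if k ∈ I then 0 else msgn I {k} * v (insert k I) := by
  unfold vee dxe
  rw [Finset.sum_congr rfl (fun J _ => show (msgn I J * if J = {k} then (1:ℂ) else 0) * v (I ∪ J)
      = if J = {k} then msgn I {k} * v (I ∪ {k}) else 0 by
    split_ifs with h
    · subst h; ring
    · ring), Finset.sum_ite_eq' (univ \ I).powerset ({k}) (fun J => msgn I {k} * v (I ∪ {k}))]
  rw [union_comm, ← insert_eq]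
  by_cases h : k ∈ I <;> simp [mem_powerset, singleton_subset_iff, h]

lemma oneG_apply (c : Fin n → ℂ) (S : Finset (Fin n)) :
    oneG c S = ∑ j, c j * dxe j S := by
  unfold oneG dxe
  refine Finset.sum_congr rfl fun j _ => ?_
  split_ifs <;> ring

lemma wedge_oneG' (c : Fin n → ℂ) (v : GF n) (S : Finset (Fin n)) :
    wedge (oneG c) v S = ∑ j, c j * wedge (dxe j) v S := by
  unfold wedge
  simp only [oneG_apply, Finset.sum_mul, Finset.mul_sum]
  rw [Finset.sum_comm]
  refine Finset.sum_congr rfl fun j _ => Finset.sum_congr rfl fun I _ => by ring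

lemma vee_oneG' (c : Fin n → ℂ) (v : GF n) (I : Finset (Fin n)) :
    vee (oneG c) v I = ∑ j, c j * vee (dxe j) v I := by
  unfold vee
  simp only [oneG_apply, Finset.sum_mul, Finset.mul_sum]
  rw [Finset.sum_comm]
  refine Finset.sum_congr rfl fun j _ => Finset.sum_congr rfl fun J _ => by ring

lemma wedge_oneG (c : Fin n → ℂ) (v : GF n) (S : Finset (Fin n)) :
    wedge (oneG c) v S = ∑ k ∈ S, msgn {k} (S.erase k) * c k * v (S.erase k) := by
  rw [wedge_oneG']
  simp only [wedge_dxe, mul_ite, mul_zero]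
  rw [Finset.sum_ite_mem, univ_inter]
  exact Finset.sum_congr rfl fun k _ => by ring

lemma vee_oneG (c : Fin n → ℂ) (v : GF n) (I : Finset (Fin n)) :
    vee (oneG c) v I = ∑ k ∈ Iᶜ, msgn I {k} * c k * v (insert k I) := by
  rw [vee_oneG']
  simp only [vee_dxe, mul_ite, mul_zero]
  rw [Finset.sum_ite, Finset.sum_const_zero, zero_add]
  rw [show univ.filter (fun k => k ∉ I) = Iᶜ from by ext a; simp]
  exact Finset.sum_congr rfl fun k _ => by ring

lemma gd_smul (c : Fin n → ℂ) (w : GF n) (S : Finset (Fin n)) :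
    gd (fun j => c j • w) S = wedge (oneG c) w S := by
  unfold gd
  rw [wedge_oneG']
  refine Finset.sum_congr rfl fun j _ => ?_
  simp only [wedge_dxe, Pi.smul_apply, smul_eq_mul]
  split_ifs <;> ring

lemma gdel_smul (c : Fin n → ℂ) (w : GF n) (S : Finset (Fin n)) :
    gdel (fun j => c j • w) S = (-1 : ℂ) ^ (S.card + 1) * vee (oneG c) w S := by
  unfold gdel
  rw [vee_oneG']
  congr 1
  refine Finset.sum_congr rfl fun j _ => ?_
  simp only [vee_dxe, Pi.smul_apply, smul_eq_mul]
  split_ifs <;> ring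

lemma filter_lt_gt_card {T : Finset (Fin n)} {k : Fin n} (hk : k ∉ T) :
    (T.filter (· < k)).card + (T.filter (k < ·)).card = T.card := by
  rw [← Finset.card_filter_add_card_filter_not (s := T) (· < k)]
  have : T.filter (fun t => ¬ t < k) = T.filter (k < ·) := by
    refine Finset.filter_congr fun t ht => ?_
    have htk : t ≠ k := fun h => hk (h ▸ ht)
    simp only [not_lt, eq_iff_iff]
    exact ⟨fun h => lt_of_le_of_ne h (Ne.symm htk), fun h => le_of_lt h⟩
  rw [this]

lemma diag_sign {T : Finset (Fin n)} {k : Fin n} (hk : k ∉ T) :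
    msgn {k} T * msgn T {k} = (-1 : ℂ) ^ T.card := by
  rw [msgn_singleton_left, msgn_singleton_right, ← pow_add, filter_lt_gt_card hk]

lemma offdiag_sign {S : Finset (Fin n)} {k m : Fin n} (hk : k ∈ S) (hm : m ∉ S) :
    msgn {k} (S.erase k) * msgn (S.erase k) {m}
      = msgn S {m} * msgn {k} ((insert m S).erase k) := by
  have hmk : m ≠ k := fun h => hm (h ▸ hk)
  have hkT : k ∉ S.erase k := notMem_erase k S
  have hmT : m ∉ S.erase k := fun h => hm (mem_of_mem_erase h)
  rw [erase_insert_of_ne hmk]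
  rw [msgn_singleton_left, msgn_singleton_right, msgn_singleton_right, msgn_singleton_left]
  nth_rewrite 3 [← insert_erase hk]
  rw [Finset.filter_insert, Finset.filter_insert]
  by_cases h : m < k
  · rw [if_pos h, if_pos h,
      Finset.card_insert_of_notMem (fun hc => hkT (Finset.mem_filter.mp hc).1),
      Finset.card_insert_of_notMem (fun hc => hmT (Finset.mem_filter.mp hc).1)]
    ring
  · rw [if_neg h, if_neg h]
    ring

lemma isGrade_wedge_oneG {l : ℕ} {w : GF n} (h : IsGrade l w) (c : Fin n → ℂ) :
    IsGrade (l + 1) (wedge (oneG c) w) := by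
  intro S hS
  rw [wedge_oneG]
  refine Finset.sum_eq_zero fun k hk => ?_
  rw [h _ (fun hc => hS (by rw [← card_erase_add_one hk, hc])), mul_zero]

lemma isGrade_gd {l : ℕ} {D : Fin n → GF n} (h : ∀ j, IsGrade l (D j)) :
    IsGrade (l + 1) (gd D) := by
  intro S hS
  refine Finset.sum_eq_zero fun k _ => ?_
  rw [wedge_dxe]
  split_ifs with hk
  · rw [h k _ (fun hc => hS (by rw [← card_erase_add_one hk, hc])), mul_zero]
  · rfl

lemma vee_oneG_grade_zero {l : ℕ} {w : GF n} (h : IsGrade l w) (c : Fin n → ℂ)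
    {S : Finset (Fin n)} (hS : S.card + 1 ≠ l) : vee (oneG c) w S = 0 := by
  rw [vee_oneG]
  refine Finset.sum_eq_zero fun k hk => ?_
  rw [h _ (fun hc => hS (by rw [← hc, card_insert_of_notMem (by simpa using hk)])), mul_zero]

lemma gdel_smul_grade {l : ℕ} {w : GF n} (h : IsGrade l w) (c : Fin n → ℂ)
    (S : Finset (Fin n)) :
    gdel (fun j => c j • w) S = (-1 : ℂ) ^ l * vee (oneG c) w S := by
  rw [gdel_smul]
  by_cases hS : S.card + 1 = l
  · rw [hS]
  · rw [vee_oneG_grade_zero h c hS, mul_zero, mul_zero]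

lemma neg_one_sq_pow (E : ℕ) : ((-1 : ℂ) ^ E) * ((-1 : ℂ) ^ E) = 1 := by
  rw [← pow_add, ← two_mul, pow_mul]
  norm_num

lemma anticomm (c : Fin n → ℂ) (w : GF n) (S : Finset (Fin n)) :
    wedge (oneG c) (fun T => (-1 : ℂ) ^ (T.card + 1) * vee (oneG c) w T) S
      + (-1 : ℂ) ^ (S.card + 1) * vee (oneG c) (wedge (oneG c) w) S
    = -(∑ j, c j ^ 2) * w S := by
  have key1 : wedge (oneG c) (fun T => (-1 : ℂ) ^ (T.card + 1) * vee (oneG c) w T) S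
      = ∑ k ∈ S, (-(c k ^ 2) * w S)
        + ∑ k ∈ S, ∑ m ∈ Sᶜ, (-1 : ℂ) ^ S.card
            * (msgn {k} (S.erase k) * msgn (S.erase k) {m}) * c k * c m
            * w (insert m (S.erase k)) := by
    rw [wedge_oneG, ← Finset.sum_add_distrib]
    refine Finset.sum_congr rfl fun k hk => ?_
    have hkc : k ∉ Sᶜ := by simp [hk]
    have hce : (S.erase k).card + 1 = S.card := card_erase_add_one hk
    rw [vee_oneG, compl_erase, Finset.sum_insert hkc, insert_erase hk, hce]
    simp only [mul_add, Finset.mul_sum]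
    congr 1
    · have hd := diag_sign (notMem_erase k S)
      have h2 := neg_one_sq_pow ((S.erase k).card)
      rw [← hce]
      linear_combination (-((-1 : ℂ) ^ (S.erase k).card) * c k ^ 2 * w S) * hd
        + (-(c k ^ 2 * w S)) * h2
    · refine Finset.sum_congr rfl fun m hm => by ring
  have key2 : (-1 : ℂ) ^ (S.card + 1) * vee (oneG c) (wedge (oneG c) w) S
      = ∑ m ∈ Sᶜ, (-(c m ^ 2) * w S)
        + ∑ m ∈ Sᶜ, ∑ k ∈ S, (-1 : ℂ) ^ (S.card + 1)
            * (msgn S {m} * msgn {k} ((insert m S).erase k)) * c m * c k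
            * w ((insert m S).erase k) := by
    rw [vee_oneG, Finset.mul_sum, ← Finset.sum_add_distrib]
    refine Finset.sum_congr rfl fun m hm => ?_
    have hm' : m ∉ S := by simpa using hm
    rw [wedge_oneG, Finset.sum_insert hm', erase_insert hm']
    simp only [mul_add, Finset.mul_sum]
    congr 1
    · have hd := diag_sign hm'
      have h2 := neg_one_sq_pow S.card
      linear_combination (-((-1 : ℂ) ^ S.card) * c m ^ 2 * w S) * hd
        + (-(c m ^ 2 * w S)) * h2
    · refine Finset.sum_congr rfl fun k hkk => by ring
  rw [key1, key2]
  have hoff : ∑ k ∈ S, ∑ m ∈ Sᶜ, (-1 : ℂ) ^ S.card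
        * (msgn {k} (S.erase k) * msgn (S.erase k) {m}) * c k * c m
        * w (insert m (S.erase k))
      + ∑ m ∈ Sᶜ, ∑ k ∈ S, (-1 : ℂ) ^ (S.card + 1)
        * (msgn S {m} * msgn {k} ((insert m S).erase k)) * c m * c k
        * w ((insert m S).erase k) = 0 := by
    rw [Finset.sum_comm (s := Sᶜ) (t := S), ← Finset.sum_add_distrib]
    refine Finset.sum_eq_zero fun k hk => ?_
    rw [← Finset.sum_add_distrib]
    refine Finset.sum_eq_zero fun m hm => ?_
    have hm' : m ∉ S := by simpa using hm
    have hmk : m ≠ k := fun h => hm' (h ▸ hk)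
    have hins : (insert m S).erase k = insert m (S.erase k) := erase_insert_of_ne hmk
    have hsign := offdiag_sign hk hm'
    rw [hins]
    rw [hins] at hsign
    linear_combination ((-1 : ℂ) ^ S.card * c k * c m * w (insert m (S.erase k))) * hsign
  have hdiag : ∑ k ∈ S, (-(c k ^ 2) * w S) + ∑ m ∈ Sᶜ, (-(c m ^ 2) * w S)
      = -(∑ j, c j ^ 2) * w S := by
    rw [Finset.sum_add_sum_compl S (fun k => -(c k ^ 2) * w S), ← Finset.sum_mul,
      ← Finset.sum_neg_distrib]
  linear_combination hoff + hdiag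

variable {x : Pt n} {j : Fin n} {f g : Pt n → ℂ}

lemma pd_congr_nhds (h : f =ᶠ[nhds x] g) (j : Fin n) : pd j f x = pd j g x := by
  unfold pd; rw [h.fderiv_eq]

lemma pd_add (hf : DifferentiableAt ℝ f x) (hg : DifferentiableAt ℝ g x) :
    pd j (fun y => f y + g y) x = pd j f x + pd j g x := by
  unfold pd; rw [fderiv_fun_add hf hg]; rfl

lemma pd_sum {ι : Type*} (s : Finset ι) (f : ι → Pt n → ℂ)
    (h : ∀ i ∈ s, DifferentiableAt ℝ (f i) x) :
    pd j (fun y => ∑ i ∈ s, f i y) x = ∑ i ∈ s, pd j (f i) x := by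
  unfold pd; rw [fderiv_fun_sum h]; simp [ContinuousLinearMap.sum_apply]

lemma pd_const_mul (hf : DifferentiableAt ℝ f x) (c : ℂ) :
    pd j (fun y => c * f y) x = c * pd j f x := by
  unfold pd; rw [fderiv_const_mul hf c]; rfl

lemma pd_mul (hf : DifferentiableAt ℝ f x) (hg : DifferentiableAt ℝ g x) :
    pd j (fun y => f y * g y) x = pd j f x * g x + f x * pd j g x := by
  unfold pd; rw [fderiv_fun_mul hf hg]
  simp [ContinuousLinearMap.add_apply, ContinuousLinearMap.smul_apply]
  ring

lemma pd_const (c : ℂ) : pd j (fun _ => c) x = 0 := by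
  unfold pd; rw [fderiv_fun_const]; rfl

def expF (ζ : Fin n → ℂ) : Pt n → ℂ := fun y => Complex.exp (∑ j, ζ j * (y j : ℂ))

def linF (ζ : Fin n → ℂ) : Pt n →L[ℝ] ℂ :=
  ∑ k : Fin n, ζ k • (Complex.ofRealCLM.comp (ContinuousLinearMap.proj k))

lemma linF_apply (ζ : Fin n → ℂ) (v : Pt n) : linF ζ v = ∑ k, ζ k * (v k : ℂ) := by
  unfold linF
  simp [ContinuousLinearMap.sum_apply, ContinuousLinearMap.smul_apply, mul_comm]

lemma expF_hasFDerivAt (ζ : Fin n → ℂ) (x : Pt n) :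
    HasFDerivAt (expF ζ) (expF ζ x • linF ζ) x := by
  have h1 : HasFDerivAt (fun y : Pt n => ∑ k, ζ k * (y k : ℂ)) (linF ζ) x := by
    rw [show (fun y : Pt n => ∑ k, ζ k * (y k : ℂ)) = linF ζ from funext fun v => (linF_apply ζ v).symm]
    exact (linF ζ).hasFDerivAt
  exact h1.cexp

lemma expF_diff (ζ : Fin n → ℂ) (x : Pt n) : DifferentiableAt ℝ (expF ζ) x :=
  (expF_hasFDerivAt ζ x).differentiableAt

lemma pd_expF (ζ : Fin n → ℂ) (x : Pt n) (j : Fin n) :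
    pd j (expF ζ) x = ζ j * expF ζ x := by
  unfold pd
  rw [(expF_hasFDerivAt ζ x).fderiv]
  rw [ContinuousLinearMap.smul_apply, linF_apply]
  simp only [smul_eq_mul, Pi.single_apply]
  rw [Finset.sum_congr rfl (fun k _ => show ζ k * (((if k = j then (1:ℝ) else 0) : ℝ) : ℂ)
      = if k = j then ζ k else 0 by split_ifs <;> simp)]
  rw [Finset.sum_ite_eq' univ j (fun k => ζ k)]
  simp [mul_comm]

lemma wedge_dxe_comb2 (j : Fin n) (a b : ℂ) (v w : GF n) (T : Finset (Fin n)) :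
    wedge (dxe j) (fun T' => a * v T' + b * w T') T
      = a * wedge (dxe j) v T + b * wedge (dxe j) w T := by
  simp only [wedge_dxe]; split_ifs <;> ring

lemma vee_dxe_comb2 (j : Fin n) (a b : ℂ) (v w : GF n) (T : Finset (Fin n)) :
    vee (dxe j) (fun T' => a * v T' + b * w T') T
      = a * vee (dxe j) v T + b * vee (dxe j) w T := by
  simp only [vee_dxe]; split_ifs <;> ring

lemma wedge_dxe_comb3 (j : Fin n) (a b : ℂ) (v w z : GF n) (T : Finset (Fin n)) :
    wedge (dxe j) (fun T' => a * v T' + b * (w T' + z T')) T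
      = a * wedge (dxe j) v T + b * (wedge (dxe j) w T + wedge (dxe j) z T) := by
  simp only [wedge_dxe]; split_ifs <;> ring

lemma vee_dxe_comb3 (j : Fin n) (a b : ℂ) (v w z : GF n) (T : Finset (Fin n)) :
    vee (dxe j) (fun T' => a * v T' + b * (w T' + z T')) T
      = a * vee (dxe j) v T + b * (vee (dxe j) w T + vee (dxe j) z T) := by
  simp only [vee_dxe]; split_ifs <;> ring

lemma wedge_oneG_add (c : Fin n → ℂ) (v w : GF n) (T : Finset (Fin n)) :
    wedge (oneG c) (fun T' => v T' + w T') T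
      = wedge (oneG c) v T + wedge (oneG c) w T := by
  simp only [wedge_oneG, ← Finset.sum_add_distrib]
  exact Finset.sum_congr rfl fun k _ => by ring

lemma vee_oneG_add (c : Fin n → ℂ) (v w : GF n) (T : Finset (Fin n)) :
    vee (oneG c) (fun T' => v T' + w T') T
      = vee (oneG c) v T + vee (oneG c) w T := by
  simp only [vee_oneG, ← Finset.sum_add_distrib]
  exact Finset.sum_congr rfl fun k _ => by ring

lemma pd_wedge_oneG (c : Fin n → ℂ) (w : Form n) (T : Finset (Fin n))
    (hw : ∀ T', DifferentiableAt ℝ (fun y => w y T') x) :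
    pd j (fun y => wedge (oneG c) (w y) T) x
      = wedge (oneG c) (fun T' => pd j (fun y => w y T') x) T := by
  rw [show (fun y => wedge (oneG c) (w y) T)
      = fun y => ∑ k ∈ T, msgn {k} (T.erase k) * c k * w y (T.erase k) from
    funext fun y => wedge_oneG c (w y) T]
  rw [pd_sum T _ (fun k _ => ((hw (T.erase k)).const_mul _)), wedge_oneG]
  exact Finset.sum_congr rfl fun k _ => by
    rw [pd_const_mul (hw (T.erase k))]

lemma pd_vee_oneG (c : Fin n → ℂ) (w : Form n) (T : Finset (Fin n))
    (hw : ∀ T', DifferentiableAt ℝ (fun y => w y T') x) :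
    pd j (fun y => vee (oneG c) (w y) T) x
      = vee (oneG c) (fun T' => pd j (fun y => w y T') x) T := by
  rw [show (fun y => vee (oneG c) (w y) T)
      = fun y => ∑ k ∈ Tᶜ, msgn T {k} * c k * w y (insert k T) from
    funext fun y => vee_oneG c (w y) T]
  rw [pd_sum Tᶜ _ (fun k _ => ((hw (insert k T)).const_mul _)), vee_oneG]
  exact Finset.sum_congr rfl fun k _ => by
    rw [pd_const_mul (hw (insert k T))]

lemma diffAt_wedge_oneG (c : Fin n → ℂ) (w : Form n) (T : Finset (Fin n))
    (hw : ∀ T', DifferentiableAt ℝ (fun y => w y T') x) :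
    DifferentiableAt ℝ (fun y => wedge (oneG c) (w y) T) x := by
  rw [show (fun y => wedge (oneG c) (w y) T)
      = fun y => ∑ k ∈ T, msgn {k} (T.erase k) * c k * w y (T.erase k) from
    funext fun y => wedge_oneG c (w y) T]
  exact DifferentiableAt.fun_sum fun k _ => (hw (T.erase k)).const_mul _

lemma diffAt_vee_oneG (c : Fin n → ℂ) (w : Form n) (T : Finset (Fin n))
    (hw : ∀ T', DifferentiableAt ℝ (fun y => w y T') x) :
    DifferentiableAt ℝ (fun y => vee (oneG c) (w y) T) x := by
  rw [show (fun y => vee (oneG c) (w y) T)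
      = fun y => ∑ k ∈ Tᶜ, msgn T {k} * c k * w y (insert k T) from
    funext fun y => vee_oneG c (w y) T]
  exact DifferentiableAt.fun_sum fun k _ => (hw (insert k T)).const_mul _

lemma diffAt_gd (D : Fin n → Form n) (T : Finset (Fin n))
    (hD : ∀ k T', DifferentiableAt ℝ (fun y => D k y T') x) :
    DifferentiableAt ℝ (fun y => gd (fun k => D k y) T) x := by
  rw [show (fun y => gd (fun k => D k y) T)
      = fun y => ∑ k, if k ∈ T then msgn {k} (T.erase k) * D k y (T.erase k) else 0 from
    funext fun y => Finset.sum_congr rfl fun k _ => wedge_dxe k (D k y) T]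
  refine DifferentiableAt.fun_sum fun k _ => ?_
  split_ifs with h
  · exact (hD k (T.erase k)).const_mul _
  · exact differentiableAt_const 0

lemma diffAt_gdel (D : Fin n → Form n) (T : Finset (Fin n))
    (hD : ∀ k T', DifferentiableAt ℝ (fun y => D k y T') x) :
    DifferentiableAt ℝ (fun y => gdel (fun k => D k y) T) x := by
  rw [show (fun y => gdel (fun k => D k y) T)
      = fun y => (-1 : ℂ) ^ (T.card + 1)
          * ∑ k, if k ∈ T then 0 else msgn T {k} * D k y (insert k T) from
    funext fun y => by
      unfold gdel
      congr 1
      exact Finset.sum_congr rfl fun k _ => vee_dxe k (D k y) T]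
  refine DifferentiableAt.const_mul ?_ _
  refine DifferentiableAt.fun_sum fun k _ => ?_
  split_ifs with h
  · exact differentiableAt_const 0
  · exact (hD k (insert k T)).const_mul _

lemma wedge_dxe_const (j : Fin n) (a : ℂ) (v : GF n) (T : Finset (Fin n)) :
    wedge (dxe j) (fun T' => a * v T') T = a * wedge (dxe j) v T := by
  simp only [wedge_dxe]; split_ifs <;> ring

lemma sign_swap_vee {l : ℕ} {w : GF n} (h : IsGrade l w) (c : Fin n → ℂ)
    (T : Finset (Fin n)) :
    (-1 : ℂ) ^ (T.card + 1) * vee (oneG c) w T = (-1 : ℂ) ^ l * vee (oneG c) w T := by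
  rw [← gdel_smul, gdel_smul_grade h]


/-- identity (A.7).  For a constant complex 1-form `ζ` and a `C²`
`l`-form `u` on an open set `G ⊆ ℝⁿ`, pointwise on `G`:
`e_{−ζ}(dδ+δd)(e_ζ u) = (dδ+δd)u + (−1)^l d(ζ∨u) + ζ∧δu + δ(ζ∧u) + (−1)^{l+1} ζ∨du − ⟨ζ,ζ⟩u`. -/
theorem statement8 (hn : 2 ≤ n) (G : Set (Pt n)) (hG : IsOpen G) (ζ : Fin n → ℂ)
    (l : ℕ) (hl : l ≤ n) (u : Form n)
    (hu : ∀ S : Finset (Fin n), ContDiffOn ℝ 2 (fun x => u x S) G)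
    (hugr : ∀ x, IsGrade l (u x)) :
    ∀ x ∈ G,
      Complex.exp (-(∑ j, ζ j * (x j : ℂ))) •
          hodgeLap (fun y => Complex.exp (∑ j, ζ j * (y j : ℂ)) • u y) x
        = hodgeLap u x
          + (-1 : ℂ) ^ l • dCl (fun y => vee (oneG ζ) (u y)) x
          + wedge (oneG ζ) (delCl u x)
          + delCl (fun y => wedge (oneG ζ) (u y)) x
          + (-1 : ℂ) ^ (l + 1) • vee (oneG ζ) (dCl u x)
          - (∑ j, ζ j ^ 2) • u x := by
  intro x hx
  have hEu : (fun y => Complex.exp (∑ j, ζ j * (y j : ℂ)) • u y)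
      = fun y => expF ζ y • u y := rfl
  rw [hEu]
  have hGx : G ∈ nhds x := hG.mem_nhds hx
  have hud : ∀ y ∈ G, ∀ T, DifferentiableAt ℝ (fun z => u z T) y := fun y hy T =>
    ((hu T).contDiffAt (hG.mem_nhds hy)).differentiableAt two_ne_zero
  have hudx : ∀ T, DifferentiableAt ℝ (fun z => u z T) x := hud x hx
  have hDud : ∀ (k : Fin n) (T : Finset (Fin n)),
      DifferentiableAt ℝ (fun y => Dcl u k y T) x := by
    intro k T
    have h2 : ContDiffAt ℝ 1 (fderiv ℝ (fun z => u z T)) x :=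
      ((hu T).contDiffAt hGx).fderiv_right (by norm_num)
    exact (h2.differentiableAt one_ne_zero).clm_apply (differentiableAt_const _)
  have hDgr : ∀ (y : Pt n) (k : Fin n), IsGrade l (Dcl u k y) := by
    intro y k T hT
    have hz : (fun z => u z T) = fun _ => (0 : ℂ) := funext fun z => hugr z T hT
    show pd k (fun z => u z T) y = 0
    rw [hz, pd_const]
  -- first-order derivatives of E • u on G
  have hA : ∀ y ∈ G, ∀ (k : Fin n), Dcl (fun z => expF ζ z • u z) k y
      = fun T => (expF ζ y * ζ k) * u y T + expF ζ y * Dcl u k y T := by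
    intro y hy k
    funext T
    show pd k (fun z => (expF ζ z • u z) T) y = _
    simp only [Pi.smul_apply, smul_eq_mul]
    rw [pd_mul (expF_diff ζ y) (hud y hy T), pd_expF]
    unfold Dcl
    ring
  have hB : ∀ y ∈ G, ∀ T, dCl (fun z => expF ζ z • u z) y T
      = expF ζ y * (wedge (oneG ζ) (u y) T + dCl u y T) := by
    intro y hy T
    show gd (fun k => Dcl (fun z => expF ζ z • u z) k y) T = _
    unfold gd
    have step : ∀ k : Fin n, wedge (dxe k) (Dcl (fun z => expF ζ z • u z) k y) T
        = (expF ζ y * ζ k) * wedge (dxe k) (u y) T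
          + expF ζ y * wedge (dxe k) (Dcl u k y) T := fun k => by
      rw [hA y hy k, wedge_dxe_comb2]
    rw [Finset.sum_congr rfl (fun k _ => step k),
      Finset.sum_add_distrib,
      show ∑ k, (expF ζ y * ζ k) * wedge (dxe k) (u y) T
          = expF ζ y * ∑ k, ζ k * wedge (dxe k) (u y) T from by
        rw [Finset.mul_sum]; exact Finset.sum_congr rfl fun k _ => by ring,
      ← wedge_oneG', ← Finset.mul_sum]
    show _ = expF ζ y * (wedge (oneG ζ) (u y) T + gd (fun k => Dcl u k y) T)
    unfold gd
    ring
  have hB' : ∀ y ∈ G, ∀ T, delCl (fun z => expF ζ z • u z) y T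
      = expF ζ y * ((-1 : ℂ) ^ (T.card + 1) * vee (oneG ζ) (u y) T + delCl u y T) := by
    intro y hy T
    show gdel (fun k => Dcl (fun z => expF ζ z • u z) k y) T = _
    unfold gdel
    have step : ∀ k : Fin n, vee (dxe k) (Dcl (fun z => expF ζ z • u z) k y) T
        = (expF ζ y * ζ k) * vee (dxe k) (u y) T
          + expF ζ y * vee (dxe k) (Dcl u k y) T := fun k => by
      rw [hA y hy k, vee_dxe_comb2]
    rw [Finset.sum_congr rfl (fun k _ => step k),
      Finset.sum_add_distrib,
      show ∑ k, (expF ζ y * ζ k) * vee (dxe k) (u y) T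
          = expF ζ y * ∑ k, ζ k * vee (dxe k) (u y) T from by
        rw [Finset.mul_sum]; exact Finset.sum_congr rfl fun k _ => by ring,
      ← vee_oneG', ← Finset.mul_sum]
    show _ = expF ζ y * ((-1 : ℂ) ^ (T.card + 1) * vee (oneG ζ) (u y) T
        + (-1 : ℂ) ^ (T.card + 1) * ∑ k, vee (dxe k) (Dcl u k y) T)
    ring
  -- differentiability of intermediate components at x
  have hdCld : ∀ T, DifferentiableAt ℝ (fun y => dCl u y T) x := fun T =>
    diffAt_gd (fun k => Dcl u k) T (fun k T' => hDud k T')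
  have hdelCld : ∀ T, DifferentiableAt ℝ (fun y => delCl u y T) x := fun T =>
    diffAt_gdel (fun k => Dcl u k) T (fun k T' => hDud k T')
  have hQd : ∀ T, DifferentiableAt ℝ
      (fun y => (-1 : ℂ) ^ (T.card + 1) * vee (oneG ζ) (u y) T + delCl u y T) x := fun T =>
    ((diffAt_vee_oneG ζ u T hudx).const_mul _).add (hdelCld T)
  have hPd : ∀ T, DifferentiableAt ℝ
      (fun y => wedge (oneG ζ) (u y) T + dCl u y T) x := fun T =>
    (diffAt_wedge_oneG ζ u T hudx).add (hdCld T)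
  -- second-order computations
  have hC1 : ∀ (k : Fin n), Dcl (delCl (fun z => expF ζ z • u z)) k x
      = fun T => (expF ζ x * ζ k)
            * ((-1 : ℂ) ^ (T.card + 1) * vee (oneG ζ) (u x) T + delCl u x T)
          + expF ζ x * ((-1 : ℂ) ^ (T.card + 1) * vee (oneG ζ) (Dcl u k x) T
            + Dcl (delCl u) k x T) := by
    intro k
    funext T
    show pd k (fun y => delCl (fun z => expF ζ z • u z) y T) x = _
    rw [pd_congr_nhds (Filter.eventuallyEq_of_mem hGx (fun y hy => hB' y hy T)) k,
      pd_mul (expF_diff ζ x) (hQd T), pd_expF,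
      pd_add ((diffAt_vee_oneG ζ u T hudx).const_mul _) (hdelCld T),
      pd_const_mul (diffAt_vee_oneG ζ u T hudx), pd_vee_oneG ζ u T hudx]
    show ζ k * expF ζ x * ((-1 : ℂ) ^ (T.card + 1) * vee (oneG ζ) (u x) T + delCl u x T)
        + expF ζ x * ((-1 : ℂ) ^ (T.card + 1) * vee (oneG ζ) (Dcl u k x) T
          + Dcl (delCl u) k x T) = _
    ring
  have hC2 : ∀ (k : Fin n), Dcl (dCl (fun z => expF ζ z • u z)) k x
      = fun T => (expF ζ x * ζ k) * (wedge (oneG ζ) (u x) T + dCl u x T)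
          + expF ζ x * (wedge (oneG ζ) (Dcl u k x) T + Dcl (dCl u) k x T) := by
    intro k
    funext T
    show pd k (fun y => dCl (fun z => expF ζ z • u z) y T) x = _
    rw [pd_congr_nhds (Filter.eventuallyEq_of_mem hGx (fun y hy => hB y hy T)) k,
      pd_mul (expF_diff ζ x) (hPd T), pd_expF,
      pd_add (diffAt_wedge_oneG ζ u T hudx) (hdCld T),
      pd_wedge_oneG ζ u T hudx]
    show ζ k * expF ζ x * (wedge (oneG ζ) (u x) T + dCl u x T)
        + expF ζ x * (wedge (oneG ζ) (Dcl u k x) T + Dcl (dCl u) k x T) = _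
    ring
  -- expansion of the two second-order pieces
  have hDvee : ∀ (k : Fin n), Dcl (fun y => vee (oneG ζ) (u y)) k x
      = fun T => vee (oneG ζ) (Dcl u k x) T := by
    intro k
    funext T
    show pd k (fun y => vee (oneG ζ) (u y) T) x = _
    rw [pd_vee_oneG ζ u T hudx]
    rfl
  have hDwedge : ∀ (k : Fin n), Dcl (fun y => wedge (oneG ζ) (u y)) k x
      = fun T => wedge (oneG ζ) (Dcl u k x) T := by
    intro k
    funext T
    show pd k (fun y => wedge (oneG ζ) (u y) T) x = _
    rw [pd_wedge_oneG ζ u T hudx]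
    rfl
  have hL1 : ∀ S : Finset (Fin n), dCl (delCl (fun z => expF ζ z • u z)) x S
      = expF ζ x * (wedge (oneG ζ)
            (fun T => (-1 : ℂ) ^ (T.card + 1) * vee (oneG ζ) (u x) T + delCl u x T) S
          + ((-1 : ℂ) ^ l * dCl (fun y => vee (oneG ζ) (u y)) x S
            + dCl (delCl u) x S)) := by
    intro S
    show gd (fun k => Dcl (delCl (fun z => expF ζ z • u z)) k x) S = _
    unfold gd
    have step : ∀ k : Fin n, wedge (dxe k) (Dcl (delCl (fun z => expF ζ z • u z)) k x) S
        = (expF ζ x * ζ k) * wedge (dxe k)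
            (fun T => (-1 : ℂ) ^ (T.card + 1) * vee (oneG ζ) (u x) T + delCl u x T) S
          + expF ζ x * ((-1 : ℂ) ^ l * wedge (dxe k) (vee (oneG ζ) (Dcl u k x)) S
            + wedge (dxe k) (Dcl (delCl u) k x) S) := fun k => by
      rw [hC1 k, wedge_dxe_comb3 k (expF ζ x * ζ k) (expF ζ x)
        (fun T => (-1 : ℂ) ^ (T.card + 1) * vee (oneG ζ) (u x) T + delCl u x T)
        (fun T => (-1 : ℂ) ^ (T.card + 1) * vee (oneG ζ) (Dcl u k x) T)
        (fun T => Dcl (delCl u) k x T) S]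
      congr 2
      rw [show (fun T => (-1 : ℂ) ^ (T.card + 1) * vee (oneG ζ) (Dcl u k x) T)
          = fun T => (-1 : ℂ) ^ l * vee (oneG ζ) (Dcl u k x) T from
        funext fun T => sign_swap_vee (hDgr x k) ζ T]
      rw [wedge_dxe_const]
    rw [Finset.sum_congr rfl (fun k _ => step k), Finset.sum_add_distrib,
      show ∑ k, (expF ζ x * ζ k) * wedge (dxe k)
            (fun T => (-1 : ℂ) ^ (T.card + 1) * vee (oneG ζ) (u x) T + delCl u x T) S
          = expF ζ x * ∑ k, ζ k * wedge (dxe k)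
            (fun T => (-1 : ℂ) ^ (T.card + 1) * vee (oneG ζ) (u x) T + delCl u x T) S from by
        rw [Finset.mul_sum]; exact Finset.sum_congr rfl fun k _ => by ring,
      ← wedge_oneG', ← Finset.mul_sum]
    have e1 : dCl (fun y => vee (oneG ζ) (u y)) x S
        = ∑ i, wedge (dxe i) (vee (oneG ζ) (Dcl u i x)) S := by
      show ∑ i, wedge (dxe i) (Dcl (fun y => vee (oneG ζ) (u y)) i x) S = _
      exact Finset.sum_congr rfl fun i _ => by rw [hDvee i]
    have e2 : dCl (delCl u) x S = ∑ i, wedge (dxe i) (Dcl (delCl u) i x) S := rfl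
    rw [Finset.sum_add_distrib, e1, e2, Finset.mul_sum]
    ring
  have hL2 : ∀ S : Finset (Fin n), delCl (dCl (fun z => expF ζ z • u z)) x S
      = expF ζ x * ((-1 : ℂ) ^ (S.card + 1)
            * vee (oneG ζ) (fun T => wedge (oneG ζ) (u x) T + dCl u x T) S
          + (delCl (fun y => wedge (oneG ζ) (u y)) x S + delCl (dCl u) x S)) := by
    intro S
    show gdel (fun k => Dcl (dCl (fun z => expF ζ z • u z)) k x) S = _
    unfold gdel
    have step : ∀ k : Fin n, vee (dxe k) (Dcl (dCl (fun z => expF ζ z • u z)) k x) S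
        = (expF ζ x * ζ k) * vee (dxe k)
            (fun T => wedge (oneG ζ) (u x) T + dCl u x T) S
          + expF ζ x * (vee (dxe k) (wedge (oneG ζ) (Dcl u k x)) S
            + vee (dxe k) (Dcl (dCl u) k x) S) := fun k => by
      rw [hC2 k, vee_dxe_comb3 k (expF ζ x * ζ k) (expF ζ x)
        (fun T => wedge (oneG ζ) (u x) T + dCl u x T)
        (fun T => wedge (oneG ζ) (Dcl u k x) T)
        (fun T => Dcl (dCl u) k x T) S]
    rw [Finset.sum_congr rfl (fun k _ => step k), Finset.sum_add_distrib,
      show ∑ k, (expF ζ x * ζ k) * vee (dxe k)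
            (fun T => wedge (oneG ζ) (u x) T + dCl u x T) S
          = expF ζ x * ∑ k, ζ k * vee (dxe k)
            (fun T => wedge (oneG ζ) (u x) T + dCl u x T) S from by
        rw [Finset.mul_sum]; exact Finset.sum_congr rfl fun k _ => by ring,
      ← vee_oneG']
    have e1 : delCl (fun y => wedge (oneG ζ) (u y)) x S
        = (-1 : ℂ) ^ (S.card + 1) * ∑ i, vee (dxe i) (wedge (oneG ζ) (Dcl u i x)) S := by
      show (-1 : ℂ) ^ (S.card + 1)
          * ∑ i, vee (dxe i) (Dcl (fun y => wedge (oneG ζ) (u y)) i x) S = _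
      congr 1
      exact Finset.sum_congr rfl fun i _ => by rw [hDwedge i]
    have e2 : delCl (dCl u) x S
        = (-1 : ℂ) ^ (S.card + 1) * ∑ i, vee (dxe i) (Dcl (dCl u) i x) S := rfl
    rw [show ∑ k, expF ζ x * (vee (dxe k) (wedge (oneG ζ) (Dcl u k x)) S
          + vee (dxe k) (Dcl (dCl u) k x) S)
        = expF ζ x * (∑ k, vee (dxe k) (wedge (oneG ζ) (Dcl u k x)) S
          + ∑ k, vee (dxe k) (Dcl (dCl u) k x) S) from by
      rw [← Finset.sum_add_distrib, Finset.mul_sum], e1, e2]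
    ring
  -- final assembly
  have hone : Complex.exp (-(∑ j, ζ j * (x j : ℂ))) * expF ζ x = 1 := by
    rw [show expF ζ x = Complex.exp (∑ j, ζ j * (x j : ℂ)) from rfl, ← Complex.exp_add]
    simp
  have collapse : ∀ a b : ℂ, Complex.exp (-(∑ j, ζ j * (x j : ℂ)))
      * (expF ζ x * a + expF ζ x * b) = a + b := fun a b => by
    calc Complex.exp (-(∑ j, ζ j * (x j : ℂ))) * (expF ζ x * a + expF ζ x * b)
        = (Complex.exp (-(∑ j, ζ j * (x j : ℂ))) * expF ζ x) * (a + b) := by ring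
      _ = a + b := by rw [hone]; ring
  have hgradd : IsGrade (l + 1) (dCl u x) := isGrade_gd (fun k => hDgr x k)
  funext S
  have hsign5 : (-1 : ℂ) ^ (S.card + 1) * vee (oneG ζ) (dCl u x) S
      = (-1 : ℂ) ^ (l + 1) * vee (oneG ζ) (dCl u x) S := by
    by_cases h : S.card + 1 = l + 1
    · rw [h]
    · rw [vee_oneG_grade_zero hgradd ζ h]; ring
  have hAC := anticomm ζ (u x) S
  simp only [hodgeLap, Pi.add_apply, Pi.sub_apply, Pi.smul_apply, smul_eq_mul]
  rw [hL1 S, hL2 S, collapse]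
  rw [wedge_oneG_add ζ (fun T => (-1 : ℂ) ^ (T.card + 1) * vee (oneG ζ) (u x) T)
      (delCl u x) S,
    vee_oneG_add ζ (wedge (oneG ζ) (u x)) (dCl u x) S]
  linear_combination hAC + hsign5


end EMPaper
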